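/- In the root system of type D_l, for the Coxeter element w = w_1 ... w_l and any i with 1 ≤ i ≤ l-3, both w^i(r_1) and w^i(r_2) are of the form y + r_3 + r_4 + ... + r_{i+2}, where y ∈ {r_1, r_2}. In particular w^i(r_1) and w^i(r_2) lie in the root subsystem generated by r_1,...,r_{l-1}. -/
import Mathlib


open Matrix

/-- The standard basis vector `e k` of `ℝ^n` (0-indexed). -/
noncomputable def basisVec (n k : ℕ) : Fin n → ℝ := fun j => if (j : ℕ) = k then 1 else 0

/-- Reflection through the hyperplane perpendicular to `v`. -/
noncomputable def reflect {n : ℕ} (v : Fin n → ℝ) (x : Fin n → ℝ) : Fin n → ℝ :=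
  x - (2 * (v ⬝ᵥ x) / (v ⬝ᵥ v)) • v


set_option maxHeartbeats 1000000

section Aux

lemma dot_basis {n : ℕ} (p : Fin n) (x : Fin n → ℝ) : basisVec n p ⬝ᵥ x = x p := by
  simp [basisVec, dotProduct, Fin.val_inj]

lemma dot_basis' {n : ℕ} (p : Fin n) (x : Fin n → ℝ) : x ⬝ᵥ basisVec n p = x p := by
  simp [basisVec, dotProduct, Fin.val_inj]

lemma basis_apply {n : ℕ} (p j : Fin n) : basisVec n p j = if j = p then 1 else 0 := by
  simp [basisVec, Fin.val_inj]

lemma xcongr {n : ℕ} (x : Fin n → ℝ) {a b : ℕ} {ha : a < n} {hb : b < n} (h : a = b) :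
    x ⟨a, ha⟩ = x ⟨b, hb⟩ := by subst h; rfl

lemma reflect_sub {n : ℕ} (p q : Fin n) (hpq : p ≠ q) (x : Fin n → ℝ) (j : Fin n) :
    reflect (basisVec n p - basisVec n q) x j =
      if j = p then x q else if j = q then x p else x j := by
  have h1 : (basisVec n p - basisVec n q) ⬝ᵥ x = x p - x q := by
    rw [sub_dotProduct, dot_basis, dot_basis]
  have h2 : (basisVec n p - basisVec n q) ⬝ᵥ (basisVec n p - basisVec n q) = 2 := by
    rw [sub_dotProduct, dotProduct_sub, dotProduct_sub, dot_basis, dot_basis, dot_basis',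
      dot_basis']
    simp [basis_apply, hpq, hpq.symm]
    norm_num
  simp only [reflect, h1, h2, Pi.sub_apply, Pi.smul_apply, smul_eq_mul, basis_apply]
  split_ifs <;> simp_all <;> ring

lemma reflect_add {n : ℕ} (p q : Fin n) (hpq : p ≠ q) (x : Fin n → ℝ) (j : Fin n) :
    reflect (basisVec n p + basisVec n q) x j =
      if j = p then -x q else if j = q then -x p else x j := by
  have h1 : (basisVec n p + basisVec n q) ⬝ᵥ x = x p + x q := by
    rw [add_dotProduct, dot_basis, dot_basis]
  have h2 : (basisVec n p + basisVec n q) ⬝ᵥ (basisVec n p + basisVec n q) = 2 := by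
    rw [add_dotProduct, dotProduct_add, dotProduct_add, dot_basis, dot_basis, dot_basis',
      dot_basis']
    simp [basis_apply, hpq, hpq.symm]
    norm_num
  simp only [reflect, h1, h2, Pi.add_apply, Pi.sub_apply, Pi.smul_apply, smul_eq_mul, basis_apply]
  split_ifs <;> simp_all <;> ring

lemma reflect_sub' {n : ℕ} (p q : ℕ) (hp : p < n) (hq : q < n) (hpq : p ≠ q)
    (x : Fin n → ℝ) (j : Fin n) :
    reflect (basisVec n p - basisVec n q) x j =
      if (j : ℕ) = p then x ⟨q, hq⟩ else if (j : ℕ) = q then x ⟨p, hp⟩ else x j := by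
  have := reflect_sub ⟨p, hp⟩ ⟨q, hq⟩ (by simp [Fin.ext_iff, hpq]) x j
  simpa [Fin.ext_iff] using this

lemma reflect_add' {n : ℕ} (p q : ℕ) (hp : p < n) (hq : q < n) (hpq : p ≠ q)
    (x : Fin n → ℝ) (j : Fin n) :
    reflect (basisVec n p + basisVec n q) x j =
      if (j : ℕ) = p then -x ⟨q, hq⟩ else if (j : ℕ) = q then -x ⟨p, hp⟩ else x j := by
  have := reflect_add ⟨p, hp⟩ ⟨q, hq⟩ (by simp [Fin.ext_iff, hpq]) x j
  simpa [Fin.ext_iff] using this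

lemma foldr_comp {α β : Type*} (g : α → (β → β)) (L : List α) (b : β → β) :
    L.foldr (fun k f => g k ∘ f) b = (L.foldr (fun k f => g k ∘ f) id) ∘ b := by
  induction L with
  | nil => rfl
  | cons a L ih => simp [List.foldr_cons, ih]; rfl

lemma Slemma (l : ℕ) (hl : 4 ≤ l) (r : ℕ → Fin l → ℝ)
    (hr : ∀ i, 3 ≤ i → i ≤ l → r i = basisVec l (l - i) - basisVec l (l - i + 1)) :
    ∀ m, m ≤ l - 2 → ∀ (x : Fin l → ℝ) (j : Fin l),
      (List.range m).foldr (fun k f => reflect (r (k + 3)) ∘ f) id x j =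
        if h : l - 2 - m ≤ (j : ℕ) ∧ (j : ℕ) < l - 2 then x ⟨(j : ℕ) + 1, by omega⟩
        else if (j : ℕ) = l - 2 then x ⟨l - 2 - m, by omega⟩ else x j := by
  intro m
  induction m with
  | zero =>
    intro _ x j
    simp only [List.range_zero, List.foldr_nil, id_eq]
    split_ifs with h1 h2
    · omega
    · exact xcongr x (by omega)
    · rfl
  | succ m ih =>
    intro hm x j
    rw [List.range_succ, List.foldr_append, List.foldr_cons, List.foldr_nil, foldr_comp]
    have hx : (List.range m).foldr (fun k f => reflect (r (k + 3)) ∘ f) id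
        ((reflect (r (m + 3)) ∘ id) x) j = _ := ih (by omega) ((reflect (r (m + 3)) ∘ id) x) j
    rw [Function.comp_apply, hx]
    have hr3 : r (m + 3) = basisVec l (l - (m + 3)) - basisVec l (l - (m + 3) + 1) :=
      hr (m + 3) (by omega) (by omega)
    have key : ∀ (j' : Fin l), (reflect (r (m + 3)) ∘ id) x j' =
        if (j' : ℕ) = l - (m + 3) then x ⟨l - (m + 3) + 1, by omega⟩
        else if (j' : ℕ) = l - (m + 3) + 1 then x ⟨l - (m + 3), by omega⟩ else x j' := by
      intro j'
      rw [Function.comp_apply, id_eq, hr3,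
        reflect_sub' (l - (m + 3)) (l - (m + 3) + 1) (by omega) (by omega) (by omega)]
    simp only [key]
    split_ifs <;> first
      | rfl
      | omega
      | (exact xcongr x (by omega))

lemma Wlemma (l : ℕ) (hl : 4 ≤ l) (r : ℕ → Fin l → ℝ)
    (hr1 : r 1 = basisVec l (l - 2) + basisVec l (l - 1))
    (hr2 : r 2 = basisVec l (l - 2) - basisVec l (l - 1))
    (hr : ∀ i, 3 ≤ i → i ≤ l → r i = basisVec l (l - i) - basisVec l (l - i + 1))
    (w : (Fin l → ℝ) → (Fin l → ℝ))
    (hw : w = (List.range l).foldr (fun k f => reflect (r (k + 1)) ∘ f) id) :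
    ∀ (x : Fin l → ℝ) (j : Fin l),
      w x j = if h : (j : ℕ) < l - 2 then x ⟨(j : ℕ) + 1, by omega⟩
        else if (j : ℕ) = l - 2 then -x ⟨0, by omega⟩ else -x j := by
  intro x j
  have hsplit : w = reflect (r 1) ∘ reflect (r 2) ∘
      (List.range (l - 2)).foldr (fun k f => reflect (r (k + 3)) ∘ f) id := by
    rw [hw]
    have h1 : List.range l = List.range 2 ++ (List.range (l - 2)).map (2 + ·) := by
      conv_lhs => rw [show l = 2 + (l - 2) by omega]
      rw [List.range_add]
    rw [h1, List.foldr_append]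
    have h2 : (((List.range (l - 2)).map (2 + ·)).foldr
        (fun k f => reflect (r (k + 1)) ∘ f) id)
        = (List.range (l - 2)).foldr (fun k f => reflect (r (k + 3)) ∘ f) id := by
      rw [List.foldr_map]
      congr 1
      funext k f
      have : 2 + k + 1 = k + 3 := by omega
      rw [this]
    rw [h2]
    rfl
  rw [hsplit]
  simp only [Function.comp_apply]
  have hS := Slemma l hl r hr (l - 2) le_rfl x
  rw [hr1, reflect_add' (l - 2) (l - 1) (by omega) (by omega) (by omega)]
  have key2 : ∀ (j' : Fin l), reflect (r 2)
      ((List.range (l - 2)).foldr (fun k f => reflect (r (k + 3)) ∘ f) id x) j' =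
      if (j' : ℕ) = l - 2 then
        ((List.range (l - 2)).foldr (fun k f => reflect (r (k + 3)) ∘ f) id x) ⟨l - 1, by omega⟩
      else if (j' : ℕ) = l - 1 then
        ((List.range (l - 2)).foldr (fun k f => reflect (r (k + 3)) ∘ f) id x) ⟨l - 2, by omega⟩
      else ((List.range (l - 2)).foldr (fun k f => reflect (r (k + 3)) ∘ f) id x) j' := by
    intro j'
    rw [hr2, reflect_sub' (l - 2) (l - 1) (by omega) (by omega) (by omega)]
  by_cases h1 : (j : ℕ) < l - 2
  · rw [if_neg (by omega), if_neg (by omega), key2 j, if_neg (by omega), if_neg (by omega),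
      hS j, dif_pos (by omega), dif_pos h1]
  · by_cases h2 : (j : ℕ) = l - 2
    · rw [dif_neg h1, if_pos h2, if_pos h2, key2 ⟨l - 1, by omega⟩,
        if_neg (show ¬((⟨l - 1, by omega⟩ : Fin l) : ℕ) = l - 2 by show ¬(l - 1 = l - 2); omega),
        if_pos rfl, hS ⟨l - 2, by omega⟩,
        dif_neg (show ¬(l - 2 - (l - 2) ≤ l - 2 ∧ l - 2 < l - 2) by omega),
        if_pos rfl]
      exact congrArg Neg.neg (xcongr x (by omega))
    · have h3 : (j : ℕ) = l - 1 := by omega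
      rw [dif_neg h1, if_neg h2, if_neg h2, if_pos h3, key2 ⟨l - 2, by omega⟩,
        if_pos rfl, hS ⟨l - 1, by omega⟩,
        dif_neg (show ¬(l - 2 - (l - 2) ≤ l - 1 ∧ l - 1 < l - 2) by omega),
        if_neg (show ¬(l - 1 = l - 2) by omega)]
      exact congrArg Neg.neg (xcongr x (by omega))

end Aux

/-- Type `D_l` (fork at `r_3`): for the Coxeter element `w = w_1 ⋯ w_l` and
`1 ≤ i ≤ l-3`, both `w^i (r 1)` and `w^i (r 2)` are of the form
`y + r_3 + r_4 + ⋯ + r_{i+2}` with `y ∈ {r_1, r_2}`; in particular they lie in the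
root subsystem generated by `r_1, …, r_{l-1}` (they are integral linear combinations
of `r_1, …, r_{l-1}`). -/
theorem stmt_9 (l : ℕ) (hl : 4 ≤ l)
    (r : ℕ → Fin l → ℝ)
    (hr1 : r 1 = basisVec l (l - 2) + basisVec l (l - 1))
    (hr2 : r 2 = basisVec l (l - 2) - basisVec l (l - 1))
    (hr : ∀ i, 3 ≤ i → i ≤ l → r i = basisVec l (l - i) - basisVec l (l - i + 1))
    (w : (Fin l → ℝ) → (Fin l → ℝ))
    (hw : w = (List.range l).foldr (fun k f => reflect (r (k + 1)) ∘ f) id) :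
    ∀ i, 1 ≤ i → i ≤ l - 3 →
      (∃ y, (y = r 1 ∨ y = r 2) ∧ w^[i] (r 1) = y + ∑ k ∈ Finset.Icc 3 (i + 2), r k) ∧
      (∃ y, (y = r 1 ∨ y = r 2) ∧ w^[i] (r 2) = y + ∑ k ∈ Finset.Icc 3 (i + 2), r k) ∧
      (∃ c : ℕ → ℤ, w^[i] (r 1) = ∑ k ∈ Finset.Icc 1 (l - 1), (c k : ℝ) • r k) ∧
      (∃ c : ℕ → ℤ, w^[i] (r 2) = ∑ k ∈ Finset.Icc 1 (l - 1), (c k : ℝ) • r k) := by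
  intro i hi1 hi2
  have hW := Wlemma l hl r hr1 hr2 hr w hw
  have hiter : ∀ i, i ≤ l - 3 →
      (∀ j : Fin l, w^[i] (r 1) j =
        (if (j : ℕ) = l - 2 - i then (1:ℝ) else 0) + (if (j : ℕ) = l - 1 then (-1)^i else 0)) ∧
      (∀ j : Fin l, w^[i] (r 2) j =
        (if (j : ℕ) = l - 2 - i then (1:ℝ) else 0) - (if (j : ℕ) = l - 1 then (-1)^i else 0)) := by
    intro i
    induction i with
    | zero =>
      intro _
      constructor <;> intro j <;>
        simp [hr1, hr2, basisVec]
    | succ i ih =>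
      intro hi
      obtain ⟨H1, H2⟩ := ih (by omega)
      constructor <;> intro j <;>
        rw [Function.iterate_succ_apply', hW] <;>
        by_cases h1 : (j : ℕ) < l - 2
      · rw [dif_pos h1, H1 ⟨(j : ℕ) + 1, by omega⟩]
        have : (((⟨(j : ℕ) + 1, by omega⟩ : Fin l)) : ℕ) = (j : ℕ) + 1 := rfl
        rw [this]
        split_ifs <;> first | omega | ring | (exfalso; omega)
      · rw [dif_neg h1]
        by_cases h2 : (j : ℕ) = l - 2
        · rw [if_pos h2, H1 ⟨0, by omega⟩]
          have : (((⟨0, by omega⟩ : Fin l)) : ℕ) = 0 := rfl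
          rw [this]
          split_ifs <;> first | omega | ring | (exfalso; omega)
        · rw [if_neg h2, H1 j]
          have h3 : (j : ℕ) = l - 1 := by omega
          split_ifs <;> first | omega | ring | (exfalso; omega)
      · rw [dif_pos h1, H2 ⟨(j : ℕ) + 1, by omega⟩]
        have : (((⟨(j : ℕ) + 1, by omega⟩ : Fin l)) : ℕ) = (j : ℕ) + 1 := rfl
        rw [this]
        split_ifs <;> first | omega | ring | (exfalso; omega)
      · rw [dif_neg h1]
        by_cases h2 : (j : ℕ) = l - 2
        · rw [if_pos h2, H2 ⟨0, by omega⟩]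
          have : (((⟨0, by omega⟩ : Fin l)) : ℕ) = 0 := rfl
          rw [this]
          split_ifs <;> first | omega | ring | (exfalso; omega)
        · rw [if_neg h2, H2 j]
          have h3 : (j : ℕ) = l - 1 := by omega
          split_ifs <;> first | omega | ring | (exfalso; omega)
  have hsum : ∀ i, i + 3 ≤ l → ∀ j : Fin l, (∑ k ∈ Finset.Icc 3 (i + 3), r k) j =
      (if (j : ℕ) = l - 3 - i then (1:ℝ) else 0) - (if (j : ℕ) = l - 2 then 1 else 0) := by
    intro i
    induction i with
    | zero =>
      intro _ j
      rw [Finset.Icc_self, Finset.sum_singleton, hr 3 (by omega) (by omega)]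
      have h32 : l - 3 + 1 = l - 2 := by omega
      simp only [Pi.sub_apply, basisVec, h32, Nat.sub_zero]
    | succ i ih =>
      intro hi j
      have hstep : Finset.Icc 3 (i + 1 + 3) = insert (i + 4) (Finset.Icc 3 (i + 3)) := by
        ext k
        simp only [Finset.mem_Icc, Finset.mem_insert]
        omega
      rw [hstep, Finset.sum_insert (by simp), Pi.add_apply, ih (by omega) j,
        hr (i + 4) (by omega) (by omega)]
      have h4 : l - (i + 4) + 1 = l - 3 - i := by omega
      simp only [Pi.sub_apply, basisVec, h4]
      have h5 : l - (i + 4) = l - 3 - (i + 1) := by omega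
      rw [h5]
      split_ifs <;> first | omega | ring | (exfalso; omega)
  obtain ⟨H1, H2⟩ := hiter i hi2
  have hsum' : ∀ j : Fin l, (∑ k ∈ Finset.Icc 3 (i + 2), r k) j =
      (if (j : ℕ) = l - 2 - i then (1:ℝ) else 0) - (if (j : ℕ) = l - 2 then 1 else 0) := by
    intro j
    have := hsum (i - 1) (by omega) j
    rw [show i - 1 + 3 = i + 2 by omega, show l - 3 - (i - 1) = l - 2 - i by omega] at this
    exact this
  have key1 : w^[i] (r 1) = r (if Even i then 1 else 2) + ∑ k ∈ Finset.Icc 3 (i + 2), r k := by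
    funext j
    rw [Pi.add_apply, hsum' j, H1 j]
    rcases Nat.even_or_odd i with he | ho
    · rw [if_pos he, hr1, he.neg_one_pow, Pi.add_apply]
      simp only [basisVec]
      split_ifs <;> first | ring | omega
    · rw [if_neg (Nat.not_even_iff_odd.mpr ho), hr2, ho.neg_one_pow, Pi.sub_apply]
      simp only [basisVec]
      split_ifs <;> first | ring | omega
  have key2 : w^[i] (r 2) = r (if Even i then 2 else 1) + ∑ k ∈ Finset.Icc 3 (i + 2), r k := by
    funext j
    rw [Pi.add_apply, hsum' j, H2 j]
    rcases Nat.even_or_odd i with he | ho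
    · rw [if_pos he, hr2, he.neg_one_pow, Pi.sub_apply]
      simp only [basisVec]
      split_ifs <;> first | ring | omega
    · rw [if_neg (Nat.not_even_iff_odd.mpr ho), hr1, ho.neg_one_pow, Pi.add_apply]
      simp only [basisVec]
      split_ifs <;> first | ring | omega
  have hint : ∀ yi : ℕ, yi = 1 ∨ yi = 2 →
      ∃ c : ℕ → ℤ, r yi + ∑ k ∈ Finset.Icc 3 (i + 2), r k
        = ∑ k ∈ Finset.Icc 1 (l - 1), (c k : ℝ) • r k := by
    intro yi hyi
    refine ⟨fun k => (if k = yi then 1 else 0) + (if k ∈ Finset.Icc 3 (i + 2) then 1 else 0), ?_⟩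
    have hc : ∀ k, (((if k = yi then (1:ℤ) else 0)
          + (if k ∈ Finset.Icc 3 (i + 2) then (1:ℤ) else 0) : ℤ) : ℝ) • r k
        = (if k = yi then r k else 0) + (if k ∈ Finset.Icc 3 (i + 2) then r k else 0) := by
      intro k
      split_ifs <;> simp [two_smul]
    simp only [hc]
    rw [Finset.sum_add_distrib, Finset.sum_ite_eq' (Finset.Icc 1 (l - 1)) yi r,
      if_pos (by simp only [Finset.mem_Icc]; omega), Finset.sum_ite_mem,
      Finset.inter_eq_right.mpr (Finset.Icc_subset_Icc (by omega) (by omega))]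
  refine ⟨⟨_, ?_, key1⟩, ⟨_, ?_, key2⟩, ?_, ?_⟩
  · split_ifs <;> simp
  · split_ifs <;> simp
  · rw [key1]
    exact hint _ (by split_ifs <;> simp)
  · rw [key2]
    exact hint _ (by split_ifs <;> simp)
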